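/- Let r ≥ 2 and identify the vertices of K_{2r} with Fin (2r), placed in this circular order on a circle. Then the edge set of K_{2r} can be partitioned into r + 1 parts, each spanning a star forest, such that: for each i with 1 ≤ i ≤ r, the i-th part is the union of the two vertex-disjoint stars {i j : i+1 ≤ j ≤ i+r−1} and {(r+i) j : r+i+1 ≤ j ≤ i−1} (indices modulo 2r), each with r − 1 edges, and within this part no two edges cross; and the (r+1)-st part consists of the r antipodal edges {i, i+r} for 0 ≤ i ≤ r−1. -/

import Mathlib

/-- A simple graph is a *star forest* iff each of its connected components is a
star `K_{1,m}` (`m ≥ 0`); equivalently it is acyclic and contains no path with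
three edges, which is captured by this local condition on walks of length 3. -/
def IsStarForest {V : Type*} (G : SimpleGraph V) : Prop :=
  ∀ a b c d : V, G.Adj a b → G.Adj b c → G.Adj c d → a = c ∨ b = d

/-- With `Fin n` placed in this circular order on a circle, `x` lies strictly
inside the open circular arc from `a` to `b` (going counterclockwise). -/
def InOpenArc {n : ℕ} (a b x : Fin n) : Prop :=
  0 < (x - a).val ∧ (x - a).val < (b - a).val

/-- Two chords on the circle points `Fin n` *cross* iff they have four distinct
endpoints and exactly one endpoint of the second chord lies in the open
circular arc from one endpoint of the first chord to the other. -/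
def Cross {n : ℕ} (e f : Sym2 (Fin n)) : Prop :=
  ∃ a b c d : Fin n, e = s(a, b) ∧ f = s(c, d) ∧
    a ≠ b ∧ c ≠ d ∧ a ≠ c ∧ a ≠ d ∧ b ≠ c ∧ b ≠ d ∧
    (InOpenArc a b c ↔ ¬ InOpenArc a b d)

/-- The vertex antipodal to `i` on the circle `Fin (2r)`. -/
def antipode (r : ℕ) (i : Fin (2 * r)) : Fin (2 * r) :=
  ⟨(i.val + r) % (2 * r), Nat.mod_lt _ (Nat.lt_of_le_of_lt (Nat.zero_le _) i.isLt)⟩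

/-- The `r` antipodal edges `{i, i+r}` of `K_{2r}`. -/
def antipodalEdges (r : ℕ) : Set (Sym2 (Fin (2 * r))) :=
  {e | ∃ i : Fin (2 * r), e = s(i, antipode r i)}

/-- The star centered at `i` whose leaves are the `r - 1` vertices
`i+1, …, i+(r-1)` (indices mod `2r`). -/
def starAt (r : ℕ) (i : Fin (2 * r)) : Set (Sym2 (Fin (2 * r))) :=
  {e | ∃ j : Fin (2 * r), e = s(i, j) ∧ 1 ≤ (j - i).val ∧ (j - i).val ≤ r - 1}

/-- A set of edges is a *star* iff all its edges share a common endpoint. -/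
def IsStarEdgeSet {V : Type*} (S : Set (Sym2 V)) : Prop :=
  ∃ c : V, ∀ e ∈ S, c ∈ e

/-- Two edge sets are *vertex-disjoint* iff no vertex lies in an edge of both. -/
def VertexDisjoint {V : Type*} (A B : Set (Sym2 V)) : Prop :=
  ∀ e ∈ A, ∀ f ∈ B, ∀ v : V, v ∈ e → v ∉ f

lemma sub_val_eq {n : ℕ} (a b : Fin n) :
    ((a - b).val = a.val - b.val ∧ b.val ≤ a.val) ∨
      ((a - b).val = n + a.val - b.val ∧ a.val < b.val) := by
  have ha := a.isLt
  have hb := b.isLt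
  rw [Fin.sub_def]
  rcases le_or_gt b.val a.val with h | h
  · left
    refine ⟨?_, h⟩
    simp only
    rw [show n - b.val + a.val = n + (a.val - b.val) by omega, Nat.add_mod_left,
      Nat.mod_eq_of_lt (by omega)]
  · right
    refine ⟨?_, h⟩
    simp only
    rw [Nat.mod_eq_of_lt (by omega)]
    omega

lemma antipode_val (r : ℕ) (i : Fin (2 * r)) :
    (antipode r i).val = if i.val < r then i.val + r else i.val - r := by
  have hi := i.isLt
  simp only [antipode]
  split
  · rw [Nat.mod_eq_of_lt (by omega)]
  · rw [Nat.mod_eq_sub_mod (by omega), Nat.mod_eq_of_lt (by omega)]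
    omega

lemma val_ne_of_ne {n : ℕ} {a b : Fin n} (h : a ≠ b) : a.val ≠ b.val :=
  fun h' => h (Fin.ext h')

lemma inOpenArc_swap {n : ℕ} (p q x : Fin n) (hpq : p ≠ q) (hxp : x ≠ p) (hxq : x ≠ q) :
    (InOpenArc q p x ↔ ¬ InOpenArc p q x) := by
  have h1 := val_ne_of_ne hpq
  have h2 := val_ne_of_ne hxp
  have h3 := val_ne_of_ne hxq
  have hp := p.isLt
  have hq := q.isLt
  have hx := x.isLt
  simp only [InOpenArc]
  rcases sub_val_eq x p with ⟨e1, l1⟩ | ⟨e1, l1⟩ <;>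
    rcases sub_val_eq x q with ⟨e2, l2⟩ | ⟨e2, l2⟩ <;>
    rcases sub_val_eq q p with ⟨e3, l3⟩ | ⟨e3, l3⟩ <;>
    rcases sub_val_eq p q with ⟨e4, l4⟩ | ⟨e4, l4⟩ <;>
    omega

lemma not_cross_of_none {n : ℕ} {p q u v : Fin n}
    (h1 : ¬ InOpenArc p q u) (h2 : ¬ InOpenArc p q v) :
    ¬ Cross s(p, q) s(u, v) := by
  rintro ⟨a, b, c, d, hab, hcd, hab', hcd', hac, had, hbc, hbd, hiff⟩
  rw [Sym2.eq_iff] at hab hcd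
  -- reduce to canonical orientation
  have key : ∀ c' d' : Fin n, (c' = u ∧ d' = v) ∨ (c' = v ∧ d' = u) →
      c' ≠ a → c' ≠ b → d' ≠ a → d' ≠ b →
      (InOpenArc a b c' ↔ ¬ InOpenArc a b d') → False := by
    rintro c' d' hcd'' hca hcb hda hdb hif
    rcases hab with ⟨rfl, rfl⟩ | ⟨rfl, rfl⟩
    · rcases hcd'' with ⟨rfl, rfl⟩ | ⟨rfl, rfl⟩ <;> tauto
    · rw [inOpenArc_swap p q c' (Ne.symm hab') hcb hca,
        inOpenArc_swap p q d' (Ne.symm hab') hdb hda] at hif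
      rcases hcd'' with ⟨rfl, rfl⟩ | ⟨rfl, rfl⟩ <;> tauto
  exact key c d (by tauto) (Ne.symm hac) (Ne.symm hbc) (Ne.symm had) (Ne.symm hbd) hiff

lemma antipode_val' (r : ℕ) (i : Fin (2 * r)) :
    (i.val < r ∧ (antipode r i).val = i.val + r) ∨
      (r ≤ i.val ∧ (antipode r i).val = i.val - r) := by
  rcases lt_or_ge i.val r with h | h
  · exact Or.inl ⟨h, by rw [antipode_val, if_pos h]⟩
  · exact Or.inr ⟨h, by rw [antipode_val, if_neg (not_lt.2 h)]⟩

lemma antipode_sub (r : ℕ) (hr : 0 < r) (I : Fin (2 * r)) :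
    (antipode r I - I).val = r ∧ (I - antipode r I).val = r := by
  have hI := I.isLt
  have hA := (antipode r I).isLt
  rcases antipode_val' r I with ⟨h, hv⟩ | ⟨h, hv⟩ <;>
    rcases sub_val_eq (antipode r I) I with ⟨e1, l1⟩ | ⟨e1, l1⟩ <;>
    rcases sub_val_eq I (antipode r I) with ⟨e2, l2⟩ | ⟨e2, l2⟩ <;>
    constructor <;> omega

lemma not_cross_aux (r : ℕ) (hr : 2 ≤ r) (c1 c2 j1 j2 : Fin (2 * r))
    (h12 : (c2 - c1).val = r)
    (hj1 : 1 ≤ (j1 - c1).val) (hj1' : (j1 - c1).val ≤ r - 1)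
    (hj2 : 1 ≤ (j2 - c2).val) (hj2' : (j2 - c2).val ≤ r - 1) :
    ¬ Cross s(c1, j1) s(c2, j2) := by
  have hd : (j2 - c1).val = (j2 - c2).val + r := by
    haveI : NeZero (2 * r) := ⟨by omega⟩
    have e1 : j2 - c1 = (j2 - c2) + (c2 - c1) := by
      rw [sub_add_sub_cancel]
    have e2 := Fin.val_add (j2 - c2) (c2 - c1)
    rw [← e1, h12] at e2
    rw [e2, Nat.mod_eq_of_lt (by omega)]
  apply not_cross_of_none
  · simp only [InOpenArc]
    omega
  · simp only [InOpenArc]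
    omega

lemma noncross (r : ℕ) (hr : 2 ≤ r) (I : Fin (2 * r)) {e f : Sym2 (Fin (2 * r))}
    (he : e ∈ starAt r I ∪ starAt r (antipode r I))
    (hf : f ∈ starAt r I ∪ starAt r (antipode r I)) : ¬ Cross e f := by
  have hsub := antipode_sub r (by omega) I
  -- same-center case
  have same : ∀ (c : Fin (2 * r)) (j j' : Fin (2 * r)),
      ¬ Cross s(c, j) s(c, j') := by
    intro c j j'
    rintro ⟨a, b, c', d', hab, hcd, _, _, hac, had, hbc, hbd, _⟩
    rw [Sym2.eq_iff] at hab hcd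
    rcases hab with ⟨rfl, rfl⟩ | ⟨rfl, rfl⟩ <;>
      rcases hcd with ⟨rfl, rfl⟩ | ⟨rfl, rfl⟩ <;> simp_all
  rcases he with ⟨j, rfl, hj1, hj2⟩ | ⟨j, rfl, hj1, hj2⟩ <;>
    rcases hf with ⟨j', rfl, hj1', hj2'⟩ | ⟨j', rfl, hj1', hj2'⟩
  · exact same I j j'
  · exact not_cross_aux r hr I (antipode r I) j j' hsub.1 hj1 hj2 hj1' hj2'
  · exact not_cross_aux r hr (antipode r I) I j j' hsub.2 hj1 hj2 hj1' hj2'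
  · exact same (antipode r I) j j'

/-- complement of the circular difference -/
lemma sub_val_compl {n : ℕ} (a b : Fin n) (h : a ≠ b) :
    (a - b).val = n - (b - a).val := by
  have := val_ne_of_ne h
  have := a.isLt
  have := b.isLt
  rcases sub_val_eq a b with ⟨e1, l1⟩ | ⟨e1, l1⟩ <;>
    rcases sub_val_eq b a with ⟨e2, l2⟩ | ⟨e2, l2⟩ <;> omega

lemma sub_self_val {n : ℕ} (a : Fin n) : (a - a).val = 0 := by
  have := a.isLt
  rw [Fin.sub_def]
  simp only
  rw [Nat.sub_add_cancel (by omega), Nat.mod_self]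

lemma mem_starAt_iff (r : ℕ) (hr : 2 ≤ r) (a b c : Fin (2 * r))
    (h1 : 1 ≤ (b - a).val) (h2 : (b - a).val ≤ r - 1) :
    s(a, b) ∈ starAt r c ↔ c = a := by
  have hab : a ≠ b := by
    intro h; rw [h, sub_self_val] at h1; omega
  constructor
  · rintro ⟨j, hj, hj1, hj2⟩
    rw [Sym2.eq_iff] at hj
    rcases hj with ⟨rfl, rfl⟩ | ⟨rfl, rfl⟩
    · rfl
    · rw [sub_val_compl a b hab] at hj1 hj2
      have := a.isLt
      omega
  · rintro rfl
    exact ⟨b, rfl, h1, h2⟩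

lemma mem_antipodalEdges_iff (r : ℕ) (hr : 2 ≤ r) (a b : Fin (2 * r)) :
    s(a, b) ∈ antipodalEdges r ↔ (b - a).val = r := by
  constructor
  · rintro ⟨i, hi⟩
    rw [Sym2.eq_iff] at hi
    have hs := antipode_sub r (by omega) i
    rcases hi with ⟨rfl, rfl⟩ | ⟨rfl, rfl⟩
    · exact hs.1
    · exact hs.2
  · intro h
    refine ⟨a, ?_⟩
    have hb : b = antipode r a := by
      have h1 := (antipode_sub r (by omega) a).1
      have hab : a ≠ b := by
        intro he; rw [he, sub_self_val] at h; omega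
      have hA : a ≠ antipode r a := by
        intro he; rw [← he, sub_self_val] at h1; omega
      apply Fin.ext
      have := b.isLt
      have := (antipode r a).isLt
      have := a.isLt
      rcases sub_val_eq b a with ⟨e1, l1⟩ | ⟨e1, l1⟩ <;>
        rcases sub_val_eq (antipode r a) a with ⟨e2, l2⟩ | ⟨e2, l2⟩ <;> omega
    rw [hb]

lemma vd_stars (r : ℕ) (hr : 2 ≤ r) (I : Fin (2 * r)) :
    VertexDisjoint (starAt r I) (starAt r (antipode r I)) := by
  have hsub := (antipode_sub r (by omega) I).1
  rintro e ⟨j, rfl, hj1, hj2⟩ f ⟨j', rfl, hj1', hj2'⟩ v hv hv'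
  -- left side: (v - I).val ≤ r - 1 ; right side: (v - I).val ≥ r
  have hj'I : (j' - I).val = (j' - antipode r I).val + r := by
    have e1 : j' - I = (j' - antipode r I) + (antipode r I - I) := by
      haveI : NeZero (2 * r) := ⟨by omega⟩
      rw [sub_add_sub_cancel]
    have e2 := Fin.val_add (j' - antipode r I) (antipode r I - I)
    rw [← e1, hsub] at e2
    rw [e2, Nat.mod_eq_of_lt (by omega)]
  have hL : (v - I).val ≤ r - 1 := by
    rw [Sym2.mem_iff] at hv
    rcases hv with h | h
    · rw [h, sub_self_val]; omega
    · rw [h]; exact hj2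
  have hR : r ≤ (v - I).val := by
    rw [Sym2.mem_iff] at hv'
    rcases hv' with h | h
    · rw [h]; omega
    · rw [h]; omega
  omega

open Fin.NatCast in
lemma starAt_ncard (r : ℕ) (hr : 2 ≤ r) (I : Fin (2 * r)) :
    (starAt r I).ncard = r - 1 := by
  haveI : NeZero (2 * r) := ⟨by omega⟩
  have hset : starAt r I =
      ↑((Finset.Icc 1 (r - 1)).image fun k : ℕ => s(I, I + (k : Fin (2 * r)))) := by
    ext e
    simp only [Finset.coe_image, Set.mem_image, Finset.mem_coe, Finset.mem_Icc]
    constructor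
    · rintro ⟨j, rfl, h1, h2⟩
      refine ⟨(j - I).val, ⟨h1, h2⟩, ?_⟩
      rw [Fin.cast_val_eq_self, add_sub_cancel]
    · rintro ⟨k, ⟨h1, h2⟩, rfl⟩
      refine ⟨I + (k : Fin (2 * r)), rfl, ?_, ?_⟩ <;>
        rw [add_sub_cancel_left, Fin.val_natCast, Nat.mod_eq_of_lt (by omega)] <;> omega
  rw [hset, Set.ncard_coe_finset, Finset.card_image_of_injOn, Nat.card_Icc]
  · omega
  · intro k hk k' hk' he
    simp only [Finset.coe_Icc, Set.mem_Icc] at hk hk'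
    rw [Sym2.eq_iff] at he
    rcases he with ⟨-, h⟩ | ⟨h, -⟩
    · have := congrArg Fin.val (add_left_cancel h)
      rw [Fin.val_natCast, Fin.val_natCast, Nat.mod_eq_of_lt (by omega),
        Nat.mod_eq_of_lt (by omega)] at this
      exact this
    · exfalso
      have : ((k' : Fin (2 * r)) : ℕ) = 0 := by
        have h' : I + (k' : Fin (2 * r)) - I = I - I := by rw [← h]
        rw [add_sub_cancel_left, sub_self] at h'
        rw [h']; rfl
      rw [Fin.val_natCast, Nat.mod_eq_of_lt (by omega)] at this
      omega

open Fin.NatCast in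
lemma antipodalEdges_ncard (r : ℕ) (hr : 2 ≤ r) :
    (antipodalEdges r).ncard = r := by
  haveI : NeZero (2 * r) := ⟨by omega⟩
  have hval : ∀ k : ℕ, k < 2 * r → ((k : Fin (2 * r)) : ℕ) = k := by
    intro k hk; rw [Fin.val_natCast, Nat.mod_eq_of_lt hk]
  have hset : antipodalEdges r =
      ↑((Finset.range r).image fun k : ℕ =>
        s((k : Fin (2 * r)), antipode r (k : Fin (2 * r)))) := by
    ext e
    simp only [Finset.coe_image, Set.mem_image, Finset.mem_coe, Finset.mem_range]
    constructor
    · rintro ⟨i, rfl⟩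
      have hi := i.isLt
      rcases lt_or_ge i.val r with h | h
      · refine ⟨i.val, h, ?_⟩
        rw [Fin.cast_val_eq_self]
      · refine ⟨i.val - r, by omega, ?_⟩
        have hu : ((i.val - r : ℕ) : Fin (2 * r)) = antipode r i := by
          apply Fin.ext
          rw [hval _ (by omega)]
          rcases antipode_val' r i with ⟨h', hv⟩ | ⟨h', hv⟩ <;> omega
        rw [hu]
        have hA : antipode r (antipode r i) = i := by
          apply Fin.ext
          rcases antipode_val' r i with ⟨h1, hv1⟩ | ⟨h1, hv1⟩ <;>
            rcases antipode_val' r (antipode r i) with ⟨h2, hv2⟩ | ⟨h2, hv2⟩ <;>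
            · have := i.isLt; omega
        rw [hA, Sym2.eq_swap]
    · rintro ⟨k, hk, rfl⟩
      exact ⟨_, rfl⟩
  rw [hset, Set.ncard_coe_finset, Finset.card_image_of_injOn, Finset.card_range]
  intro k hk k' hk' he
  simp only [Finset.coe_range, Set.mem_Iio] at hk hk'
  rw [Sym2.eq_iff] at he
  rcases he with ⟨h, -⟩ | ⟨h, -⟩
  · have := congrArg Fin.val h
    rw [hval _ (by omega), hval _ (by omega)] at this
    exact this
  · exfalso
    have := congrArg Fin.val h
    rw [hval _ (by omega)] at this
    rcases antipode_val' r ((k' : ℕ) : Fin (2 * r)) with ⟨h1, hv⟩ | ⟨h1, hv⟩ <;>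
      rw [hval _ (by omega)] at h1 hv <;> omega

lemma isStarForest_union {V : Type*} (S T : Set (Sym2 V))
    (hS : IsStarEdgeSet S) (hT : IsStarEdgeSet T) (hd : VertexDisjoint S T) :
    IsStarForest (SimpleGraph.fromEdgeSet (S ∪ T)) := by
  obtain ⟨cS, hcS⟩ := hS
  obtain ⟨cT, hcT⟩ := hT
  intro a b c d hab hbc hcd
  rw [SimpleGraph.fromEdgeSet_adj] at hab hbc hcd
  obtain ⟨hab1, hab2⟩ := hab
  obtain ⟨hbc1, hbc2⟩ := hbc
  obtain ⟨hcd1, hcd2⟩ := hcd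
  have key : ∀ c0 : V, c0 ∈ s(a, b) → c0 ∈ s(b, c) → c0 ∈ s(c, d) → a = c ∨ b = d := by
    intro c0 h1 h2 h3
    rw [Sym2.mem_iff] at h1 h2 h3
    rcases h1 with rfl | rfl
    · rcases h2 with h | h
      · exact absurd h hab2
      · exact Or.inl h
    · rcases h3 with h | h
      · exact absurd h hbc2
      · exact Or.inr h
  have mb1 : b ∈ s(a, b) := Sym2.mem_iff.2 (Or.inr rfl)
  have mb2 : b ∈ s(b, c) := Sym2.mem_iff.2 (Or.inl rfl)
  have mc2 : c ∈ s(b, c) := Sym2.mem_iff.2 (Or.inr rfl)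
  have mc3 : c ∈ s(c, d) := Sym2.mem_iff.2 (Or.inl rfl)
  rcases hab1 with h1 | h1 <;> rcases hbc1 with h2 | h2 <;> rcases hcd1 with h3 | h3
  · exact key cS (hcS _ h1) (hcS _ h2) (hcS _ h3)
  · exact absurd mc3 (hd _ h2 _ h3 c mc2)
  · exact absurd mb2 (hd _ h1 _ h2 b mb1)
  · exact absurd mb2 (hd _ h1 _ h2 b mb1)
  · exact absurd mb1 (hd _ h2 _ h1 b mb2)
  · exact absurd mc3 (hd _ h2 _ h3 c mc2)
  · exact absurd mc2 (hd _ h3 _ h2 c mc3)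
  · exact key cT (hcT _ h1) (hcT _ h2) (hcT _ h3)

lemma isStarForest_antipodal (r : ℕ) (hr : 2 ≤ r) :
    IsStarForest (SimpleGraph.fromEdgeSet (antipodalEdges r)) := by
  intro a b c d hab hbc _
  rw [SimpleGraph.fromEdgeSet_adj] at hab hbc
  have h1 := (mem_antipodalEdges_iff r hr a b).1 hab.1
  have h2 := (mem_antipodalEdges_iff r hr b c).1 hbc.1
  left
  have e1 : c - a = (c - b) + (b - a) := by
    haveI : NeZero (2 * r) := ⟨by omega⟩
    rw [sub_add_sub_cancel]
  have e2 := Fin.val_add (c - b) (b - a)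
  rw [← e1, h1, h2] at e2
  have : (c - a).val = 0 := by
    rw [e2, show r + r = 2 * r by ring, Nat.mod_self]
  apply Fin.ext
  have := a.isLt
  have := c.isLt
  rcases sub_val_eq c a with ⟨e3, l3⟩ | ⟨e3, l3⟩ <;> omega

lemma starAt_isStar (r : ℕ) (I : Fin (2 * r)) : IsStarEdgeSet (starAt r I) :=
  ⟨I, by rintro e ⟨j, rfl, -, -⟩; exact Sym2.mem_iff.2 (Or.inl rfl)⟩

def myP (r : ℕ) (hr : 2 ≤ r) : Fin (r + 1) → Set (Sym2 (Fin (2 * r))) := fun i =>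
  if h : (i : ℕ) < r then
    starAt r ⟨i, by omega⟩ ∪ starAt r (antipode r ⟨i, by omega⟩)
  else antipodalEdges r

theorem relaxed_star_forest_book_embedding_K2r (r : ℕ) (hr : 2 ≤ r) :
    ∃ P : Fin (r + 1) → Set (Sym2 (Fin (2 * r))),
      (∀ i, P i ⊆ (⊤ : SimpleGraph (Fin (2 * r))).edgeSet) ∧
      (∀ e ∈ (⊤ : SimpleGraph (Fin (2 * r))).edgeSet, ∃! i, e ∈ P i) ∧
      (∀ i, IsStarForest (SimpleGraph.fromEdgeSet (P i))) ∧
      (∀ i : Fin r,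
        P i.castSucc =
            starAt r (i.castLE (by omega)) ∪
              starAt r (antipode r (i.castLE (by omega))) ∧
          VertexDisjoint (starAt r (i.castLE (by omega)))
            (starAt r (antipode r (i.castLE (by omega)))) ∧
          (starAt r (i.castLE (by omega))).ncard = r - 1 ∧
          (starAt r (antipode r (i.castLE (by omega)))).ncard = r - 1 ∧
          (∀ e ∈ P i.castSucc, ∀ f ∈ P i.castSucc, ¬ Cross e f)) ∧
      P (Fin.last r) = antipodalEdges r ∧
      (antipodalEdges r).ncard = r := by
  have hlt : ∀ (i : Fin (r + 1)) (h : i.val < r),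
      myP r hr i = starAt r ⟨i.val, by omega⟩ ∪ starAt r (antipode r ⟨i.val, by omega⟩) := by
    intro i h
    simp only [myP]
    rw [dif_pos h]
  have hge : ∀ (i : Fin (r + 1)), ¬ i.val < r → myP r hr i = antipodalEdges r := by
    intro i h
    simp only [myP]
    rw [dif_neg h]
  have hlast : myP r hr (Fin.last r) = antipodalEdges r := hge _ (by simp [Fin.last])
  have ne_of : ∀ c j : Fin (2 * r), 1 ≤ (j - c).val → c ≠ j := by
    intro c j h1 he
    rw [he, sub_self_val] at h1
    omega
  refine ⟨myP r hr, ?_, ?_, ?_, ?_, hlast, antipodalEdges_ncard r hr⟩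
  · -- subset of edge set
    intro i e he
    rw [SimpleGraph.edgeSet_top]
    by_cases h : i.val < r
    · rw [hlt i h] at he
      rcases he with ⟨j, rfl, h1, -⟩ | ⟨j, rfl, h1, -⟩ <;>
        · simp only [Set.mem_compl_iff, Sym2.mem_diagSet, Sym2.mk_isDiag_iff]
          exact ne_of _ _ h1
    · rw [hge i h] at he
      obtain ⟨i', rfl⟩ := he
      simp only [Set.mem_compl_iff, Sym2.mem_diagSet, Sym2.mk_isDiag_iff]
      exact ne_of _ _ (by rw [(antipode_sub r (by omega) i').1]; omega)
  · -- unique part for every edge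
    have main_low : ∀ a b : Fin (2 * r), 1 ≤ (b - a).val → (b - a).val ≤ r - 1 →
        ∃! i, s(a, b) ∈ myP r hr i := by
      intro a b h1 h2
      have ha2 := a.isLt
      by_cases ha : a.val < r
      · refine ⟨⟨a.val, by omega⟩, ?_, ?_⟩
        · show s(a, b) ∈ myP r hr ⟨a.val, by omega⟩
          rw [hlt _ (by simpa using ha)]
          exact Or.inl ((mem_starAt_iff r hr a b _ h1 h2).2 (Fin.ext rfl))
        · intro i' hi'
          by_cases h' : i'.val < r
          · rw [hlt _ h'] at hi'
            rcases hi' with hm | hm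
            · have := congrArg Fin.val ((mem_starAt_iff r hr a b _ h1 h2).1 hm)
              exact Fin.ext (by simpa using this)
            · exfalso
              have := congrArg Fin.val ((mem_starAt_iff r hr a b _ h1 h2).1 hm)
              rcases antipode_val' r ⟨i'.val, by omega⟩ with ⟨hx, hv⟩ | ⟨hx, hv⟩ <;>
                simp only at hx hv <;> omega
          · exfalso
            rw [hge _ h'] at hi'
            have := (mem_antipodalEdges_iff r hr a b).1 hi'
            omega
      · refine ⟨⟨a.val - r, by omega⟩, ?_, ?_⟩
        · have hcen : antipode r (⟨a.val - r, by omega⟩ : Fin (2 * r)) = a := by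
            apply Fin.ext
            rcases antipode_val' r (⟨a.val - r, by omega⟩ : Fin (2 * r)) with
              ⟨hx, hv⟩ | ⟨hx, hv⟩ <;> simp only at hx hv <;> omega
          show s(a, b) ∈ myP r hr ⟨a.val - r, by omega⟩
          rw [hlt _ (by simp; omega)]
          exact Or.inr ((mem_starAt_iff r hr a b _ h1 h2).2 hcen)
        · intro i' hi'
          by_cases h' : i'.val < r
          · rw [hlt _ h'] at hi'
            rcases hi' with hm | hm
            · exfalso
              have := congrArg Fin.val ((mem_starAt_iff r hr a b _ h1 h2).1 hm)
              simp only at this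
              omega
            · have := congrArg Fin.val ((mem_starAt_iff r hr a b _ h1 h2).1 hm)
              rcases antipode_val' r ⟨i'.val, by omega⟩ with ⟨hx, hv⟩ | ⟨hx, hv⟩ <;>
                simp only at hx hv <;> exact Fin.ext (by simp; omega)
          · exfalso
            rw [hge _ h'] at hi'
            have := (mem_antipodalEdges_iff r hr a b).1 hi'
            omega
    intro e he
    induction e using Sym2.ind with
    | _ a b =>
      rw [SimpleGraph.mem_edgeSet, SimpleGraph.top_adj] at he
      have hd0 : (b - a).val ≠ 0 := by
        intro h0
        apply he
        have := val_ne_of_ne he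
        have := a.isLt; have := b.isLt
        rcases sub_val_eq b a with ⟨e1, l1⟩ | ⟨e1, l1⟩ <;> omega
      have hdlt := (b - a).isLt
      rcases lt_trichotomy ((b - a).val) r with hc | hc | hc
      · exact main_low a b (by omega) (by omega)
      · -- antipodal edge
        refine ⟨Fin.last r, ?_, ?_⟩
        · show s(a, b) ∈ myP r hr (Fin.last r)
          rw [hlast]
          exact (mem_antipodalEdges_iff r hr a b).2 hc
        · intro i' hi'
          by_cases h' : i'.val < r
          · exfalso
            rw [hlt _ h'] at hi'
            have not_star : ∀ c : Fin (2 * r), s(a, b) ∈ starAt r c → False := by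
              rintro c ⟨j, hj, hj1, hj2⟩
              rw [Sym2.eq_iff] at hj
              rcases hj with ⟨rfl, rfl⟩ | ⟨rfl, rfl⟩
              · omega
              · rw [sub_val_compl _ _ he] at hj2
                omega
            rcases hi' with hm | hm <;> exact not_star _ hm
          · have hv := i'.isLt
            exact Fin.ext (by simp [Fin.last]; omega)
      · have h' := sub_val_compl a b he
        have h := main_low b a (by omega) (by omega)
        rwa [show s(b, a) = s(a, b) from Sym2.eq_swap] at h
  · -- star forests
    intro i
    by_cases h : i.val < r
    · rw [hlt i h]
      exact isStarForest_union _ _ (starAt_isStar r _) (starAt_isStar r _) (vd_stars r hr _)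
    · rw [hge i h]
      exact isStarForest_antipodal r hr
  · -- the structure of the first r parts
    intro i
    have h : (Fin.castSucc i).val < r := by simpa using i.isLt
    have hc : (⟨(Fin.castSucc i).val, by omega⟩ : Fin (2 * r)) = i.castLE (by omega) :=
      Fin.ext (by simp)
    refine ⟨?_, vd_stars r hr _, starAt_ncard r hr _, starAt_ncard r hr _, ?_⟩
    · rw [hlt _ h, hc]
    · intro e he f hf
      rw [hlt _ h] at he hf
      exact noncross r hr _ he hf
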